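/- Let d ≥ 1 and let i, j be natural numbers with j ≤ d·i and d·i − j even. Then γ_d(i,j), the number of linearly independent covariants of degree i and order j of the binary d-form, equals the coefficient of t^{(d·i−j)/2} in the power series (1−t) · ∏_{s=1}^{i}(1−t^{d+s}) · (∏_{s=1}^{i}(1−t^s))^{−1} ∈ ℤ[[t]], i.e. the coefficient of t^{(d·i−j)/2} in (1−t)·[d+i choose i]_t, where [d+i choose i]_t is the Gaussian binomial coefficient. -/

import Mathlib

open Finset MvPolynomial PowerSeries

def Tset (d i N : ℕ) : Finset (Fin (d + 1) → ℕ) :=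
  (Fintype.piFinset fun _ => Finset.range (i + 1)).filter
    (fun f => (∑ k, f k) = i ∧ (∑ k : Fin (d + 1), (k : ℕ) * f k) = N)

def mcount (d i N : ℕ) : ℕ := (Tset d i N).card

lemma mem_Tset {d i N : ℕ} {f : Fin (d + 1) → ℕ} :
    f ∈ Tset d i N ↔ (∑ k, f k) = i ∧ (∑ k : Fin (d + 1), (k : ℕ) * f k) = N := by
  constructor
  · intro h; exact (Finset.mem_filter.1 h).2
  · intro h
    refine Finset.mem_filter.2 ⟨Fintype.mem_piFinset.2 fun k => ?_, h⟩
    have : f k ≤ i := h.1 ▸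
      Finset.single_le_sum (f := fun k => f k) (fun _ _ => Nat.zero_le _) (Finset.mem_univ k)
    simpa [Nat.lt_succ_iff] using this

lemma mcount_i0 (d N : ℕ) : mcount d 0 N = if N = 0 then 1 else 0 := by
  unfold mcount
  have hmem : ∀ f : Fin (d + 1) → ℕ, f ∈ Tset d 0 N ↔ f = 0 ∧ N = 0 := by
    intro f
    rw [mem_Tset]
    constructor
    · rintro ⟨h1, h2⟩
      have hf : ∀ k, f k = 0 := by
        intro k
        have := Finset.sum_eq_zero_iff.1 h1
        exact this k (Finset.mem_univ k)
      have : f = 0 := funext hf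
      subst this
      simp at h2
      exact ⟨rfl, h2.symm⟩
    · rintro ⟨rfl, rfl⟩
      simp
  split_ifs with h
  · subst h
    rw [Finset.card_eq_one]
    exact ⟨0, by ext f; simp [hmem]⟩
  · rw [Finset.card_eq_zero]
    ext f
    simp [hmem, h]

lemma mcount_d0 (i N : ℕ) : mcount 0 i N = if N = 0 then 1 else 0 := by
  unfold mcount
  have hw : ∀ f : Fin 1 → ℕ, (∑ k : Fin 1, (k : ℕ) * f k) = 0 := by
    intro f; simp
  have hmem : ∀ f : Fin 1 → ℕ, f ∈ Tset 0 i N ↔ f = (fun _ => i) ∧ N = 0 := by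
    intro f
    rw [mem_Tset]
    constructor
    · rintro ⟨h1, h2⟩
      rw [hw f] at h2
      subst h2
      refine ⟨funext fun k => ?_, rfl⟩
      have : k = 0 := Subsingleton.elim _ _
      subst this
      simpa using h1
    · rintro ⟨rfl, rfl⟩
      exact ⟨by simp, hw _⟩
  split_ifs with h
  · subst h
    rw [Finset.card_eq_one]
    exact ⟨fun _ => i, by ext f; simp [hmem]⟩
  · rw [Finset.card_eq_zero]
    ext f
    simp [hmem, h]

lemma sum_split {d : ℕ} (f : Fin (d + 2) → ℕ) :
    (∑ k, f k) = f 0 + ∑ t : Fin (d + 1), f t.succ := Fin.sum_univ_succ f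

lemma wsum_split {d : ℕ} (f : Fin (d + 2) → ℕ) :
    (∑ k : Fin (d + 2), (k : ℕ) * f k)
      = ∑ t : Fin (d + 1), ((t : ℕ) * f t.succ + f t.succ) := by
  rw [Fin.sum_univ_succ]
  rw [show ((0 : Fin (d + 2)) : ℕ) = 0 from rfl, Nat.zero_mul, Nat.zero_add]
  exact Finset.sum_congr rfl fun t _ => by rw [Fin.val_succ, Nat.succ_mul]

lemma mcount_rec (d i N : ℕ) :
    mcount (d + 1) (i + 1) N
      = mcount (d + 1) i N + (if i + 1 ≤ N then mcount d (i + 1) (N - (i + 1)) else 0) := by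
  classical
  unfold mcount
  rw [← Finset.card_filter_add_card_filter_not
    (s := Tset (d + 1) (i + 1) N) (p := fun f => 0 < f 0)]
  congr 1
  · -- positive part ↔ Tset (d+1) i N
    refine Finset.card_nbij' (fun f => fun k => if k = 0 then f 0 - 1 else f k)
      (fun g => fun k => if k = 0 then g 0 + 1 else g k) ?_ ?_ ?_ ?_
    · intro f hf
      have hpos : 0 < f 0 := (Finset.mem_filter.1 hf).2
      obtain ⟨h1, h2⟩ := mem_Tset.1 (Finset.mem_filter.1 hf).1
      refine mem_Tset.2 ⟨?_, ?_⟩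
      · rw [sum_split] at h1 ⊢
        dsimp only
        rw [if_pos rfl,
          Finset.sum_congr rfl fun t (_ : t ∈ univ) => if_neg (Fin.succ_ne_zero t)]
        omega
      · rw [wsum_split] at h2 ⊢
        dsimp only
        rw [← h2]
        exact Finset.sum_congr rfl fun t _ => by rw [if_neg (Fin.succ_ne_zero t)]
    · intro g hg
      obtain ⟨h1, h2⟩ := mem_Tset.1 hg
      refine Finset.mem_filter.2 ⟨mem_Tset.2 ⟨?_, ?_⟩, by simp⟩
      · rw [sum_split] at h1 ⊢
        dsimp only
        rw [if_pos rfl,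
          Finset.sum_congr rfl fun t (_ : t ∈ univ) => if_neg (Fin.succ_ne_zero t)]
        omega
      · rw [wsum_split] at h2 ⊢
        dsimp only
        rw [← h2]
        exact Finset.sum_congr rfl fun t _ => by rw [if_neg (Fin.succ_ne_zero t)]
    · intro f hf
      have hpos : 0 < f 0 := (Finset.mem_filter.1 hf).2
      funext k
      by_cases hk : k = 0
      · subst hk; simp; omega
      · simp [hk]
    · intro g _
      funext k
      by_cases hk : k = 0
      · subst hk; simp
      · simp [hk]
  · -- zero part
    split_ifs with hN
    · refine Finset.card_nbij' (fun f => fun t : Fin (d + 1) => f t.succ)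
        (fun g => fun k : Fin (d + 2) => Fin.cases 0 (fun t => g t) k) ?_ ?_ ?_ ?_
      · intro f hf
        have hz : ¬ 0 < f 0 := (Finset.mem_filter.1 hf).2
        have hz0 : f 0 = 0 := by omega
        obtain ⟨h1, h2⟩ := mem_Tset.1 (Finset.mem_filter.1 hf).1
        rw [sum_split, hz0, Nat.zero_add] at h1
        rw [wsum_split, Finset.sum_add_distrib, h1] at h2
        refine mem_Tset.2 ⟨?_, ?_⟩
        · dsimp only; exact h1
        · dsimp only; omega
      · intro g hg
        obtain ⟨h1, h2⟩ := mem_Tset.1 hg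
        refine Finset.mem_filter.2 ⟨mem_Tset.2 ⟨?_, ?_⟩, ?_⟩
        · rw [sum_split]
          dsimp only [Fin.cases_zero, Fin.cases_succ]
          rw [Nat.zero_add]
          exact h1
        · rw [wsum_split]
          dsimp only [Fin.cases_succ]
          rw [Finset.sum_add_distrib, h1, h2]
          omega
        · dsimp only [Fin.cases_zero]
          simp
      · intro f hf
        have hz : ¬ 0 < f 0 := (Finset.mem_filter.1 hf).2
        funext k
        refine Fin.cases ?_ ?_ k
        · dsimp only [Fin.cases_zero]; omega
        · intro t; dsimp only [Fin.cases_succ]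
      · intro g _
        funext t
        dsimp only [Fin.cases_succ]
    · rw [Finset.card_eq_zero, Finset.eq_empty_iff_forall_notMem]
      intro f hf
      have hz : ¬ 0 < f 0 := (Finset.mem_filter.1 hf).2
      have hz0 : f 0 = 0 := by omega
      obtain ⟨h1, h2⟩ := mem_Tset.1 (Finset.mem_filter.1 hf).1
      rw [sum_split, hz0, Nat.zero_add] at h1
      rw [wsum_split, Finset.sum_add_distrib, h1] at h2
      omega

noncomputable def Mser (d i : ℕ) : PowerSeries ℤ := PowerSeries.mk fun N => (mcount d i N : ℤ)

lemma Mser_i0 (d : ℕ) : Mser d 0 = 1 := by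
  ext N
  rw [Mser, coeff_mk, PowerSeries.coeff_one, mcount_i0]
  split_ifs <;> simp

lemma Mser_d0 (i : ℕ) : Mser 0 i = 1 := by
  ext N
  rw [Mser, coeff_mk, PowerSeries.coeff_one, mcount_d0]
  split_ifs <;> simp

lemma Mser_rec (d i : ℕ) :
    Mser (d + 1) (i + 1) = Mser (d + 1) i + Mser d (i + 1) * PowerSeries.X ^ (i + 1) := by
  ext N
  rw [map_add, Mser, Mser, Mser, coeff_mk, coeff_mk, PowerSeries.coeff_mul_X_pow', coeff_mk,
    mcount_rec]
  push_cast
  rfl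

lemma genfun (d i : ℕ) :
    Mser d i * ∏ t ∈ Finset.range i, (1 - (PowerSeries.X : PowerSeries ℤ) ^ (t + 1))
      = ∏ t ∈ Finset.range i, (1 - (PowerSeries.X : PowerSeries ℤ) ^ (d + t + 1)) := by
  induction d generalizing i with
  | zero => rw [Mser_d0, one_mul]; exact Finset.prod_congr rfl fun t _ => by rw [Nat.zero_add]
  | succ d ih =>
    induction i with
    | zero => simp [Mser_i0]
    | succ i ih2 =>
      have hQ : (∏ t ∈ Finset.range (i + 1), (1 - (PowerSeries.X : PowerSeries ℤ) ^ (d + t + 1)))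
          = (1 - (PowerSeries.X : PowerSeries ℤ) ^ (d + 1))
            * ∏ t ∈ Finset.range i, (1 - (PowerSeries.X : PowerSeries ℤ) ^ (d + 1 + t + 1)) := by
        rw [Finset.prod_range_succ', mul_comm]
        refine congrArg₂ HMul.hMul ?_ ?_
        · norm_num
        · exact Finset.prod_congr rfl fun t _ => by ring_nf
      have h3 : Mser d (i + 1)
          * ((∏ t ∈ Finset.range i, (1 - (PowerSeries.X : PowerSeries ℤ) ^ (t + 1)))
            * (1 - (PowerSeries.X : PowerSeries ℤ) ^ (i + 1)))
          = (1 - (PowerSeries.X : PowerSeries ℤ) ^ (d + 1))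
            * ∏ t ∈ Finset.range i, (1 - (PowerSeries.X : PowerSeries ℤ) ^ (d + 1 + t + 1)) := by
        have h4 := ih (i + 1)
        rw [hQ] at h4
        rw [Finset.prod_range_succ] at h4
        exact h4
      rw [Mser_rec, Finset.prod_range_succ, Finset.prod_range_succ]
      linear_combination (1 - (PowerSeries.X : PowerSeries ℤ) ^ (i + 1)) * ih2
        + (PowerSeries.X : PowerSeries ℤ) ^ (i + 1) * h3

lemma Icc_prod_eq {R : Type*} [CommRing R] (g : ℕ → PowerSeries R) (i : ℕ) :
    (∏ s ∈ Finset.Icc 1 i, g s) = ∏ t ∈ Finset.range i, g (t + 1) := by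
  rw [← Finset.Ico_add_one_right_eq_Icc, Finset.prod_Ico_eq_prod_range]
  simp [Nat.add_comm]

lemma coeff_rhs (d i N : ℕ) :
    PowerSeries.coeff N
        ((1 - PowerSeries.X) *
          (∏ s ∈ Finset.Icc 1 i, (1 - (PowerSeries.X : PowerSeries ℤ) ^ (d + s))) *
          PowerSeries.invOfUnit
            (∏ s ∈ Finset.Icc 1 i, (1 - (PowerSeries.X : PowerSeries ℤ) ^ s)) 1)
      = (mcount d i N : ℤ) - (if N = 0 then 0 else (mcount d i (N - 1) : ℤ)) := by
  have hP : (∏ s ∈ Finset.Icc 1 i, (1 - (PowerSeries.X : PowerSeries ℤ) ^ s))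
      = ∏ t ∈ Finset.range i, (1 - (PowerSeries.X : PowerSeries ℤ) ^ (t + 1)) :=
    Icc_prod_eq _ i
  have hQ : (∏ s ∈ Finset.Icc 1 i, (1 - (PowerSeries.X : PowerSeries ℤ) ^ (d + s)))
      = ∏ t ∈ Finset.range i, (1 - (PowerSeries.X : PowerSeries ℤ) ^ (d + t + 1)) := by
    rw [Icc_prod_eq (fun s => 1 - (PowerSeries.X : PowerSeries ℤ) ^ (d + s)) i]
    exact Finset.prod_congr rfl fun t _ => by rw [Nat.add_assoc]
  set P := ∏ t ∈ Finset.range i, (1 - (PowerSeries.X : PowerSeries ℤ) ^ (t + 1)) with hPdef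
  have hu : PowerSeries.constantCoeff P = ((1 : ℤˣ) : ℤ) := by
    rw [hPdef, map_prod]
    rw [Finset.prod_congr rfl fun t (_ : t ∈ Finset.range i) => by
      rw [map_sub, map_one, map_pow, PowerSeries.constantCoeff_X,
        zero_pow (Nat.succ_ne_zero t)] ]
    simp
  have hkey : (∏ s ∈ Finset.Icc 1 i, (1 - (PowerSeries.X : PowerSeries ℤ) ^ (d + s)))
      * PowerSeries.invOfUnit
          (∏ s ∈ Finset.Icc 1 i, (1 - (PowerSeries.X : PowerSeries ℤ) ^ s)) 1
      = Mser d i := by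
    rw [hQ, hP, ← genfun d i, mul_assoc, PowerSeries.mul_invOfUnit _ _ hu, mul_one]
  rw [mul_assoc, hkey]
  have : (1 - PowerSeries.X) * Mser d i = Mser d i - PowerSeries.X * Mser d i := by ring
  rw [this, map_sub]
  rw [Mser, coeff_mk]
  congr 1
  cases N with
  | zero =>
    rw [if_pos rfl]
    rw [PowerSeries.coeff_zero_eq_constantCoeff, map_mul, PowerSeries.constantCoeff_X, zero_mul]
  | succ n =>
    rw [if_neg (Nat.succ_ne_zero n), PowerSeries.coeff_succ_X_mul, coeff_mk]
    simp

noncomputable def Wspace (d i N : ℕ) : Submodule ℂ (MvPolynomial (Fin (d + 1)) ℂ) :=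
  Submodule.span ℂ { p | ∃ α : Fin (d + 1) →₀ ℕ,
    (∑ k, α k) = i ∧ (∑ k : Fin (d + 1), (k : ℕ) * α k) = N ∧
    p = MvPolynomial.monomial α 1 }

noncomputable def D1 (d : ℕ) :
    Derivation ℂ (MvPolynomial (Fin (d + 1)) ℂ) (MvPolynomial (Fin (d + 1)) ℂ) :=
  MvPolynomial.mkDerivation ℂ (fun k =>
    if _h : 0 < (k : ℕ) then
      ((k : ℕ) : ℂ) •
        MvPolynomial.X (⟨(k : ℕ) - 1, lt_of_le_of_lt (Nat.sub_le _ _) k.isLt⟩ : Fin (d + 1))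
    else 0)


noncomputable def D2 (d : ℕ) :
    Derivation ℂ (MvPolynomial (Fin (d + 1)) ℂ) (MvPolynomial (Fin (d + 1)) ℂ) :=
  MvPolynomial.mkDerivation ℂ (fun k =>
    if h : (k : ℕ) < d then
      (((d : ℕ) - (k : ℕ) : ℕ) : ℂ) •
        MvPolynomial.X (⟨(k : ℕ) + 1, by omega⟩ : Fin (d + 1))
    else 0)

lemma monomial_mem_Wspace {d i N : ℕ} (α : Fin (d + 1) →₀ ℕ)
    (h1 : (∑ k, α k) = i) (h2 : (∑ k : Fin (d + 1), (k : ℕ) * α k) = N) :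
    MvPolynomial.monomial α (1 : ℂ) ∈ Wspace d i N :=
  Submodule.subset_span ⟨α, h1, h2, rfl⟩

lemma sum_move {d : ℕ} (α : Fin (d + 1) →₀ ℕ) (k j : Fin (d + 1)) (hk : 1 ≤ α k)
    (w : Fin (d + 1) → ℕ) :
    ∑ t, w t * ((α - Finsupp.single k 1 + Finsupp.single j 1 : Fin (d + 1) →₀ ℕ) t)
      = (∑ t, w t * α t) - w k + w j := by
  have happ : ∀ t, (α - Finsupp.single k 1 + Finsupp.single j 1 : Fin (d + 1) →₀ ℕ) t
      = α t - (if k = t then 1 else 0) + (if j = t then 1 else 0) := by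
    intro t
    rw [Finsupp.add_apply, Finsupp.tsub_apply, Finsupp.single_apply, Finsupp.single_apply]
  rw [Finset.sum_congr rfl fun t _ => by
    rw [happ t, Nat.mul_add, Nat.mul_sub]]
  rw [Finset.sum_add_distrib, Finset.sum_tsub_distrib _ (fun t _ => by
    by_cases h : k = t
    · subst h; simpa using Nat.mul_le_mul_left (w k) hk
    · simp [h])]
  have hs1 : (∑ t, w t * (if k = t then 1 else 0)) = w k := by
    rw [Finset.sum_congr rfl fun t _ => by
      rw [mul_ite, Nat.mul_one, Nat.mul_zero]]
    simp
  have hs2 : (∑ t, w t * (if j = t then 1 else 0)) = w j := by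
    rw [Finset.sum_congr rfl fun t _ => by
      rw [mul_ite, Nat.mul_one, Nat.mul_zero]]
    simp
  rw [hs1, hs2]

lemma sum_move' {d : ℕ} (α : Fin (d + 1) →₀ ℕ) (k j : Fin (d + 1)) (hk : 1 ≤ α k) :
    ∑ t, ((α - Finsupp.single k 1 + Finsupp.single j 1 : Fin (d + 1) →₀ ℕ) t)
      = (∑ t, α t) - 1 + 1 := by
  have := sum_move α k j hk (fun _ => 1)
  simpa using this

lemma term_eq {d : ℕ} (s : Fin (d + 1) →₀ ℕ) (c c' : ℂ) (j : Fin (d + 1)) :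
    MvPolynomial.monomial s c • (c' • (MvPolynomial.X j : MvPolynomial (Fin (d + 1)) ℂ))
      = (c * c') • MvPolynomial.monomial (s + Finsupp.single j 1) (1 : ℂ) := by
  rw [MvPolynomial.X, smul_eq_mul, mul_smul_comm, MvPolynomial.monomial_mul, mul_one]
  rw [show MvPolynomial.monomial (s + Finsupp.single j 1) c
    = c • MvPolynomial.monomial (s + Finsupp.single j 1) (1 : ℂ) by
      rw [MvPolynomial.smul_monomial, smul_eq_mul, mul_one]]
  rw [smul_smul, mul_comm]

lemma D1_monomial_mem {d i N : ℕ} (α : Fin (d + 1) →₀ ℕ)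
    (h1 : (∑ k, α k) = i) (h2 : (∑ k : Fin (d + 1), (k : ℕ) * α k) = N) :
    D1 d (MvPolynomial.monomial α (1 : ℂ)) ∈ Wspace d i (N - 1) := by
  rw [D1, MvPolynomial.mkDerivation_monomial, one_smul, Finsupp.sum]
  apply Submodule.sum_mem
  intro k hk
  have hαk : 1 ≤ α k := Nat.one_le_iff_ne_zero.2 (Finsupp.mem_support_iff.1 hk)
  by_cases hk0 : 0 < (k : ℕ)
  · rw [dif_pos hk0]
    set j : Fin (d + 1) :=
      ⟨(k : ℕ) - 1, lt_of_le_of_lt (Nat.sub_le _ _) k.isLt⟩ with hj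
    rw [term_eq]
    apply Submodule.smul_mem
    have hkN : (k : ℕ) ≤ N := by
      have hterm : (k : ℕ) * α k ≤ N :=
        h2 ▸ Finset.single_le_sum (s := Finset.univ) (f := fun t : Fin (d + 1) => (t : ℕ) * α t)
          (fun _ _ => Nat.zero_le _) (Finset.mem_univ k)
      calc (k : ℕ) ≤ (k : ℕ) * α k := Nat.le_mul_of_pos_right _ hαk
      _ ≤ N := hterm
    apply monomial_mem_Wspace
    · rw [sum_move' α k j hαk, h1]
      have : 1 ≤ i := h1 ▸ le_trans hαk
        (Finset.single_le_sum (s := Finset.univ) (f := fun t : Fin (d + 1) => α t) (fun _ _ => Nat.zero_le _)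
          (Finset.mem_univ k))
      omega
    · rw [sum_move α k j hαk (fun t => (t : ℕ)), h2]
      have hjval : (j : ℕ) = (k : ℕ) - 1 := rfl
      rw [hjval]
      omega
  · rw [dif_neg hk0]
    rw [smul_zero]
    exact Submodule.zero_mem _

lemma D2_monomial_mem {d i N : ℕ} (α : Fin (d + 1) →₀ ℕ)
    (h1 : (∑ k, α k) = i) (h2 : (∑ k : Fin (d + 1), (k : ℕ) * α k) = N) :
    D2 d (MvPolynomial.monomial α (1 : ℂ)) ∈ Wspace d i (N + 1) := by
  rw [D2, MvPolynomial.mkDerivation_monomial, one_smul, Finsupp.sum]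
  apply Submodule.sum_mem
  intro k hk
  have hαk : 1 ≤ α k := Nat.one_le_iff_ne_zero.2 (Finsupp.mem_support_iff.1 hk)
  by_cases hk0 : (k : ℕ) < d
  · rw [dif_pos hk0]
    set j : Fin (d + 1) := (⟨(k : ℕ) + 1, by omega⟩ : Fin (d + 1)) with hj
    rw [term_eq]
    apply Submodule.smul_mem
    have hkN : (k : ℕ) ≤ N := by
      have hterm : (k : ℕ) * α k ≤ N :=
        h2 ▸ Finset.single_le_sum (s := Finset.univ) (f := fun t : Fin (d + 1) => (t : ℕ) * α t)
          (fun _ _ => Nat.zero_le _) (Finset.mem_univ k)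
      calc (k : ℕ) ≤ (k : ℕ) * α k := Nat.le_mul_of_pos_right _ hαk
      _ ≤ N := hterm
    apply monomial_mem_Wspace
    · rw [sum_move' α k j hαk, h1]
      have : 1 ≤ i := h1 ▸ le_trans hαk
        (Finset.single_le_sum (s := Finset.univ) (f := fun t : Fin (d + 1) => α t) (fun _ _ => Nat.zero_le _)
          (Finset.mem_univ k))
      omega
    · rw [sum_move α k j hαk (fun t => (t : ℕ)), h2]
      have hjval : (j : ℕ) = (k : ℕ) + 1 := rfl
      rw [hjval]
      omega
  · rw [dif_neg hk0]
    rw [smul_zero]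
    exact Submodule.zero_mem _

lemma D1_mem {d i N : ℕ} {p : MvPolynomial (Fin (d + 1)) ℂ} (hp : p ∈ Wspace d i N) :
    D1 d p ∈ Wspace d i (N - 1) := by
  induction hp using Submodule.span_induction with
  | mem x hx =>
    obtain ⟨α, h1, h2, rfl⟩ := hx
    exact D1_monomial_mem α h1 h2
  | zero => rw [map_zero]; exact Submodule.zero_mem _
  | add x y hx hy ihx ihy => rw [map_add]; exact Submodule.add_mem _ ihx ihy
  | smul c x hx ihx => rw [Derivation.map_smul]; exact Submodule.smul_mem _ _ ihx

lemma D2_mem {d i N : ℕ} {p : MvPolynomial (Fin (d + 1)) ℂ} (hp : p ∈ Wspace d i N) :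
    D2 d p ∈ Wspace d i (N + 1) := by
  induction hp using Submodule.span_induction with
  | mem x hx =>
    obtain ⟨α, h1, h2, rfl⟩ := hx
    exact D2_monomial_mem α h1 h2
  | zero => rw [map_zero]; exact Submodule.zero_mem _
  | add x y hx hy ihx ihy => rw [map_add]; exact Submodule.add_mem _ ihx ihy
  | smul c x hx ihx => rw [Derivation.map_smul]; exact Submodule.smul_mem _ _ ihx

lemma D1_W0 {d i : ℕ} {p : MvPolynomial (Fin (d + 1)) ℂ} (hp : p ∈ Wspace d i 0) :
    D1 d p = 0 := by
  induction hp using Submodule.span_induction with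
  | mem x hx =>
    obtain ⟨α, h1, h2, rfl⟩ := hx
    rw [D1, MvPolynomial.mkDerivation_monomial, one_smul, Finsupp.sum]
    apply Finset.sum_eq_zero
    intro k hk
    have hαk : 1 ≤ α k := Nat.one_le_iff_ne_zero.2 (Finsupp.mem_support_iff.1 hk)
    have hk0 : (k : ℕ) = 0 := by
      have hterm : (k : ℕ) * α k = 0 := by
        have := Finset.sum_eq_zero_iff.1 h2
        exact this k (Finset.mem_univ k)
      have := Nat.mul_eq_zero.1 hterm
      omega
    rw [dif_neg (by omega)]
    rw [smul_zero]
  | zero => rw [map_zero]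
  | add x y hx hy ihx ihy => rw [map_add, ihx, ihy, add_zero]
  | smul c x hx ihx => rw [Derivation.map_smul, ihx, smul_zero]

lemma mkDerivation_diag_monomial (d : ℕ) (c : Fin (d + 1) → ℂ) (α : Fin (d + 1) →₀ ℕ) :
    MvPolynomial.mkDerivation ℂ (fun k => c k • MvPolynomial.X k)
        (MvPolynomial.monomial α (1 : ℂ))
      = (∑ k, (α k : ℂ) * c k) • MvPolynomial.monomial α (1 : ℂ) := by
  rw [MvPolynomial.mkDerivation_monomial, one_smul, Finsupp.sum]
  have hres : ∀ k ∈ α.support, α - Finsupp.single k 1 + Finsupp.single k 1 = α := by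
    intro k hk
    have hαk : 1 ≤ α k := Nat.one_le_iff_ne_zero.2 (Finsupp.mem_support_iff.1 hk)
    ext t
    rw [Finsupp.add_apply, Finsupp.tsub_apply, Finsupp.single_apply]
    by_cases h : k = t
    · subst h; simp; omega
    · simp [h]
  rw [Finset.sum_congr rfl fun k hk => by
    rw [term_eq (α - Finsupp.single k 1) ((α k : ℕ) : ℂ) (c k) k, hres k hk]]
  rw [← Finset.sum_smul]
  congr 1
  apply Finset.sum_subset (Finset.subset_univ _)
  intro k _ hk
  have : α k = 0 := by
    by_contra hne
    exact hk (Finsupp.mem_support_iff.2 hne)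
  rw [this]
  simp

lemma bracket_eq (d : ℕ) :
    ⁅D1 d, D2 d⁆ = MvPolynomial.mkDerivation ℂ
      (fun k : Fin (d + 1) => (((d : ℕ) : ℂ) - 2 * ((k : ℕ) : ℂ)) • MvPolynomial.X k) := by
  apply MvPolynomial.derivation_ext
  intro k
  rw [Derivation.commutator_apply, MvPolynomial.mkDerivation_X]
  rw [show D1 d (MvPolynomial.X k) = _ from MvPolynomial.mkDerivation_X ℂ _ k]
  rw [show D2 d (MvPolynomial.X k) = _ from MvPolynomial.mkDerivation_X ℂ _ k]
  by_cases hk0 : 0 < (k : ℕ)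
  · by_cases hkd : (k : ℕ) < d
    · rw [dif_pos hk0, dif_pos hkd, Derivation.map_smul, Derivation.map_smul]
      rw [show D1 d (MvPolynomial.X (⟨(k : ℕ) + 1, by omega⟩ : Fin (d + 1))) = _ from
        MvPolynomial.mkDerivation_X ℂ _ _]
      rw [show D2 d (MvPolynomial.X
          (⟨(k : ℕ) - 1, lt_of_le_of_lt (Nat.sub_le _ _) k.isLt⟩ : Fin (d + 1))) = _ from
        MvPolynomial.mkDerivation_X ℂ _ _]
      rw [dif_pos (show 0 < ((⟨(k : ℕ) + 1, by omega⟩ : Fin (d + 1)) : ℕ) from Nat.succ_pos _)]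
      rw [dif_pos (show ((⟨(k : ℕ) - 1, lt_of_le_of_lt (Nat.sub_le _ _) k.isLt⟩ :
        Fin (d + 1)) : ℕ) < d by show (k : ℕ) - 1 < d; omega)]
      have e1 : (⟨((⟨(k : ℕ) + 1, by omega⟩ : Fin (d + 1)) : ℕ) - 1,
          lt_of_le_of_lt (Nat.sub_le _ _) (Fin.isLt _)⟩ : Fin (d + 1)) = k := by
        apply Fin.ext; show (k : ℕ) + 1 - 1 = (k : ℕ); omega
      have e2 : (⟨((⟨(k : ℕ) - 1, lt_of_le_of_lt (Nat.sub_le _ _) k.isLt⟩ :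
          Fin (d + 1)) : ℕ) + 1, by show (k : ℕ) - 1 + 1 < d + 1; omega⟩ : Fin (d + 1)) = k := by
        apply Fin.ext; show (k : ℕ) - 1 + 1 = (k : ℕ); omega
      rw [e1, e2]
      rw [smul_smul, smul_smul, ← sub_smul]
      congr 1
      rw [show ((⟨(k : ℕ) + 1, by omega⟩ : Fin (d + 1)) : ℕ) = (k : ℕ) + 1 from rfl]
      rw [show ((⟨(k : ℕ) - 1, lt_of_le_of_lt (Nat.sub_le _ _) k.isLt⟩ :
        Fin (d + 1)) : ℕ) = (k : ℕ) - 1 from rfl]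
      rw [show (d - ((k : ℕ) - 1)) = d - (k : ℕ) + 1 by omega]
      rw [Nat.cast_sub (le_of_lt hkd)]
      push_cast [Nat.cast_sub (le_of_lt hkd)]
      ring
    · -- k = d > 0
      have hkd' : (k : ℕ) = d := by omega
      rw [dif_pos hk0, dif_neg hkd, map_zero, Derivation.map_smul]
      rw [show D2 d (MvPolynomial.X
          (⟨(k : ℕ) - 1, lt_of_le_of_lt (Nat.sub_le _ _) k.isLt⟩ : Fin (d + 1))) = _ from
        MvPolynomial.mkDerivation_X ℂ _ _]
      rw [dif_pos (show ((⟨(k : ℕ) - 1, lt_of_le_of_lt (Nat.sub_le _ _) k.isLt⟩ :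
        Fin (d + 1)) : ℕ) < d by show (k : ℕ) - 1 < d; omega)]
      have e2 : (⟨((⟨(k : ℕ) - 1, lt_of_le_of_lt (Nat.sub_le _ _) k.isLt⟩ :
          Fin (d + 1)) : ℕ) + 1, by show (k : ℕ) - 1 + 1 < d + 1; omega⟩ : Fin (d + 1)) = k := by
        apply Fin.ext; show (k : ℕ) - 1 + 1 = (k : ℕ); omega
      rw [e2, smul_smul, zero_sub, ← neg_smul]
      congr 1
      rw [show ((⟨(k : ℕ) - 1, lt_of_le_of_lt (Nat.sub_le _ _) k.isLt⟩ :
        Fin (d + 1)) : ℕ) = (k : ℕ) - 1 from rfl]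
      rw [show d - ((k : ℕ) - 1) = 1 by omega]
      rw [hkd']
      push_cast
      ring
  · -- k = 0
    have hk0' : (k : ℕ) = 0 := by omega
    rw [dif_neg hk0, map_zero, sub_zero]
    by_cases hd : 0 < d
    · rw [dif_pos (show (k : ℕ) < d by omega), Derivation.map_smul]
      rw [show D1 d (MvPolynomial.X (⟨(k : ℕ) + 1, by omega⟩ : Fin (d + 1))) = _ from
        MvPolynomial.mkDerivation_X ℂ _ _]
      rw [dif_pos (show 0 < ((⟨(k : ℕ) + 1, by omega⟩ : Fin (d + 1)) : ℕ) from Nat.succ_pos _)]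
      have e1 : (⟨((⟨(k : ℕ) + 1, by omega⟩ : Fin (d + 1)) : ℕ) - 1,
          lt_of_le_of_lt (Nat.sub_le _ _) (Fin.isLt _)⟩ : Fin (d + 1)) = k := by
        apply Fin.ext; show (k : ℕ) + 1 - 1 = (k : ℕ); omega
      rw [e1, smul_smul]
      congr 1
      rw [show ((⟨(k : ℕ) + 1, by omega⟩ : Fin (d + 1)) : ℕ) = (k : ℕ) + 1 from rfl]
      rw [hk0', Nat.sub_zero]
      push_cast
      ring
    · rw [dif_neg (show ¬ (k : ℕ) < d by omega), map_zero]
      have hs : ((d : ℕ) : ℂ) - 2 * ((k : ℕ) : ℂ) = 0 := by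
        rw [hk0', show d = 0 by omega]
        norm_num
      rw [hs, zero_smul]

section Sl2
variable (d i : ℕ)

noncomputable def eop (d : ℕ) := (D1 d).toLinearMap
noncomputable def fop (d : ℕ) := (D2 d).toLinearMap

lemma end_pow_succ_apply {M : Type*} [AddCommGroup M] [Module ℂ M]
    (f : Module.End ℂ M) (n : ℕ) (x : M) : (f ^ (n + 1)) x = f ((f ^ n) x) := by
  rw [pow_succ']
  rfl

lemma H_apply {d i N : ℕ} {p : MvPolynomial (Fin (d + 1)) ℂ} (hp : p ∈ Wspace d i N) :
    D1 d (D2 d p) - D2 d (D1 d p) = (((d * i : ℕ) : ℂ) - 2 * (N : ℂ)) • p := by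
  induction hp using Submodule.span_induction with
  | mem x hx =>
    obtain ⟨α, h1, h2, rfl⟩ := hx
    have hb := DFunLike.congr_fun (bracket_eq d) (MvPolynomial.monomial α (1 : ℂ))
    rw [Derivation.commutator_apply] at hb
    rw [hb, mkDerivation_diag_monomial]
    congr 1
    have hc1 : (∑ k, ((α k : ℕ) : ℂ)) = (i : ℂ) := by
      rw [← Nat.cast_sum, h1]
    have hc2 : (∑ k : Fin (d + 1), (((k : ℕ) * α k : ℕ) : ℂ)) = (N : ℂ) := by
      rw [← Nat.cast_sum, h2]
    calc ∑ k, (α k : ℂ) * (((d : ℕ) : ℂ) - 2 * ((k : ℕ) : ℂ))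
        = ∑ k : Fin (d + 1), (((d : ℕ) : ℂ) * ((α k : ℕ) : ℂ)
            - 2 * (((k : ℕ) * α k : ℕ) : ℂ)) := by
          refine Finset.sum_congr rfl fun k _ => ?_
          push_cast
          ring
      _ = ((d : ℕ) : ℂ) * (∑ k, ((α k : ℕ) : ℂ))
            - 2 * (∑ k : Fin (d + 1), (((k : ℕ) * α k : ℕ) : ℂ)) := by
          rw [Finset.sum_sub_distrib, ← Finset.mul_sum, ← Finset.mul_sum]
      _ = (((d * i : ℕ) : ℂ) - 2 * (N : ℂ)) := by
          rw [hc1, hc2]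
          push_cast
          ring
  | zero => simp
  | add x y hx hy ihx ihy =>
    rw [map_add, map_add, map_add, map_add, smul_add]
    rw [show D1 d (D2 d x) + D1 d (D2 d y) - (D2 d (D1 d x) + D2 d (D1 d y))
      = (D1 d (D2 d x) - D2 d (D1 d x)) + (D1 d (D2 d y) - D2 d (D1 d y)) by ring]
    rw [ihx, ihy]
  | smul c x hx ihx =>
    rw [Derivation.map_smul, Derivation.map_smul, Derivation.map_smul, Derivation.map_smul]
    rw [← smul_sub, ihx, smul_comm]

lemma fop_pow_mem {d i N : ℕ} (k : ℕ) {p : MvPolynomial (Fin (d + 1)) ℂ}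
    (hp : p ∈ Wspace d i N) : ((fop d) ^ k) p ∈ Wspace d i (N + k) := by
  induction k with
  | zero => simpa using hp
  | succ k ih =>
    rw [pow_succ']
    have : ((fop d) * ((fop d) ^ k)) p = fop d (((fop d) ^ k) p) := rfl
    rw [this]
    have := D2_mem (d := d) (i := i) (N := N + k) ih
    simpa [Nat.add_assoc, fop] using this

lemma ef_pow {d i m : ℕ} {u : MvPolynomial (Fin (d + 1)) ℂ} (hu : u ∈ Wspace d i m) :
    ∀ k : ℕ, eop d (((fop d) ^ (k + 1)) u)
      = ((fop d) ^ (k + 1)) (eop d u)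
        + (((k : ℂ) + 1) * (((d * i : ℕ) : ℂ) - 2 * (m : ℂ) - (k : ℂ))) •
            ((fop d) ^ k) u := by
  intro k
  induction k with
  | zero =>
    have h := H_apply (d := d) (i := i) (N := m) hu
    have : eop d (fop d u) = fop d (eop d u) + (((d * i : ℕ) : ℂ) - 2 * (m : ℂ)) • u :=
      sub_eq_iff_eq_add'.1 h
    simpa [pow_one] using this
  | succ k ih =>
    have hv : ((fop d) ^ (k + 1)) u ∈ Wspace d i (m + (k + 1)) := fop_pow_mem (k + 1) hu
    have hH := H_apply (d := d) (i := i) (N := m + (k + 1)) hv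
    have h1 : eop d (fop d (((fop d) ^ (k + 1)) u))
        = fop d (eop d (((fop d) ^ (k + 1)) u))
          + (((d * i : ℕ) : ℂ) - 2 * ((m + (k + 1) : ℕ) : ℂ)) • ((fop d) ^ (k + 1)) u :=
      sub_eq_iff_eq_add'.1 hH
    have hstep : ((fop d) ^ (k + 2)) u = fop d (((fop d) ^ (k + 1)) u) :=
      end_pow_succ_apply (fop d) (k + 1) u
    rw [hstep, h1, ih]
    rw [map_add, LinearMap.map_smul]
    have hstep2 : fop d (((fop d) ^ (k + 1)) (eop d u)) = ((fop d) ^ (k + 2)) (eop d u) :=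
      (end_pow_succ_apply (fop d) (k + 1) (eop d u)).symm
    have hstep3 : fop d (((fop d) ^ k) u) = ((fop d) ^ (k + 1)) u :=
      (end_pow_succ_apply (fop d) k u).symm
    rw [hstep2, hstep3, add_assoc, ← add_smul]
    congr 2
    push_cast
    ring

lemma D1_W0' {d i : ℕ} {p : MvPolynomial (Fin (d + 1)) ℂ} (hp : p ∈ Wspace d i 0) :
    eop d p = 0 := D1_W0 hp

lemma ef_inj {d i N : ℕ} (hN : 1 ≤ N) (hdi : 2 * N ≤ d * i)
    {v : MvPolynomial (Fin (d + 1)) ℂ} (hv : v ∈ Wspace d i (N - 1))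
    (h : eop d (fop d v) = 0) : v = 0 := by
  obtain ⟨n, rfl⟩ : ∃ n, N = n + 1 := ⟨N - 1, by omega⟩
  rw [Nat.add_sub_cancel] at hv
  have claim : ∀ k : ℕ, k ≤ n → ∃ w, w ∈ Wspace d i (n - k) ∧ v = ((fop d) ^ k) w := by
    intro k
    induction k with
    | zero => intro _; exact ⟨v, by simpa using hv, by simp⟩
    | succ k ih =>
      intro hk1
      obtain ⟨w, hw, hveq⟩ := ih (by omega)
      have hEfk : eop d (((fop d) ^ (k + 1)) w) = 0 := by
        have : fop d v = ((fop d) ^ (k + 1)) w := by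
          rw [hveq, end_pow_succ_apply]
        rw [← this]; exact h
      have hid := ef_pow (d := d) (i := i) (m := n - k) hw k
      rw [hEfk] at hid
      set c : ℂ := ((k : ℂ) + 1) * (((d * i : ℕ) : ℂ) - 2 * ((n - k : ℕ) : ℂ) - (k : ℂ))
        with hc
      have hc2 : (((d * i : ℕ) : ℂ) - 2 * ((n - k : ℕ) : ℂ) - (k : ℂ))
          = ((d * i - 2 * (n - k) - k : ℕ) : ℂ) := by
        have h1 : 2 * (n - k) + k ≤ d * i := by omega
        push_cast [Nat.cast_sub (show 2 * (n - k) ≤ d * i by omega),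
          Nat.cast_sub (show k ≤ d * i - 2 * (n - k) by omega)]
        ring
      have hcne : c ≠ 0 := by
        rw [hc, hc2]
        apply mul_ne_zero
        · exact Nat.cast_add_one_ne_zero k
        · have : d * i - 2 * (n - k) - k ≠ 0 := by omega
          exact_mod_cast Nat.cast_ne_zero.2 this
      have hveq2 : v = ((fop d) ^ (k + 1)) (c⁻¹ • (-(eop d w))) := by
        have h2 : c • ((fop d) ^ k) w = -(((fop d) ^ (k + 1)) (eop d w)) :=
          eq_neg_of_add_eq_zero_right hid.symm
        rw [map_smul, map_neg, ← h2, hveq, smul_smul, inv_mul_cancel₀ hcne, one_smul]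
      refine ⟨c⁻¹ • (-(eop d w)), ?_, hveq2⟩
      apply Submodule.smul_mem
      apply Submodule.neg_mem
      have := D1_mem (d := d) (i := i) (N := n - k) hw
      have hsub : n - k - 1 = n - (k + 1) := by omega
      rw [hsub] at this
      exact this
  obtain ⟨w, hw, hveq⟩ := claim n le_rfl
  rw [Nat.sub_self] at hw
  have hEw : eop d w = 0 := D1_W0' hw
  have hid := ef_pow (d := d) (i := i) (m := 0) hw n
  have hEfn : eop d (((fop d) ^ (n + 1)) w) = 0 := by
    have : fop d v = ((fop d) ^ (n + 1)) w := by
      rw [hveq, end_pow_succ_apply]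
    rw [← this]; exact h
  rw [hEfn, hEw, map_zero] at hid
  have hcne : ((n : ℂ) + 1) * (((d * i : ℕ) : ℂ) - 2 * ((0 : ℕ) : ℂ) - (n : ℂ)) ≠ 0 := by
    apply mul_ne_zero
    · exact Nat.cast_add_one_ne_zero n
    · have hc2 : (((d * i : ℕ) : ℂ) - 2 * ((0 : ℕ) : ℂ) - (n : ℂ))
          = ((d * i - n : ℕ) : ℂ) := by
        push_cast [Nat.cast_sub (show n ≤ d * i by omega)]
        ring
      rw [hc2]
      have : d * i - n ≠ 0 := by omega
      exact_mod_cast Nat.cast_ne_zero.2 this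
  have : ((fop d) ^ n) w = 0 := by
    have h0 := hid
    rw [zero_add] at h0
    exact (smul_eq_zero.1 h0.symm).resolve_left hcne
  rw [hveq, this]

end Sl2


lemma ef_inj' {d i N : ℕ} (hN : 1 ≤ N) (hdi : 2 * N ≤ d * i)
    {v : MvPolynomial (Fin (d + 1)) ℂ} (hv : v ∈ Wspace d i (N - 1))
    (h : (D1 d).toLinearMap ((D2 d).toLinearMap v) = 0) : v = 0 :=
  ef_inj hN hdi hv h

noncomputable def Sfin (d i N : ℕ) : Finset (Fin (d + 1) →₀ ℕ) :=
  (Tset d i N).image (fun f => Finsupp.equivFunOnFinite.symm f)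

lemma mem_Sfin {d i N : ℕ} {α : Fin (d + 1) →₀ ℕ} :
    α ∈ Sfin d i N ↔ (∑ k, α k) = i ∧ (∑ k : Fin (d + 1), (k : ℕ) * α k) = N := by
  rw [Sfin, Finset.mem_image]
  constructor
  · rintro ⟨f, hf, rfl⟩
    obtain ⟨h1, h2⟩ := mem_Tset.1 hf
    constructor
    · rw [← h1]
      exact Finset.sum_congr rfl fun k _ => by simp
    · rw [← h2]
      exact Finset.sum_congr rfl fun k _ => by simp
  · rintro ⟨h1, h2⟩
    refine ⟨⇑α, mem_Tset.2 ⟨h1, h2⟩, ?_⟩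
    simp

lemma card_Sfin (d i N : ℕ) : (Sfin d i N).card = mcount d i N :=
  Finset.card_image_of_injective _ (Equiv.injective _)

lemma Wspace_eq (d i N : ℕ) :
    Wspace d i N = Submodule.span ℂ (Set.range
      (fun x : (Sfin d i N : Finset (Fin (d + 1) →₀ ℕ)) =>
        MvPolynomial.monomial (x : Fin (d + 1) →₀ ℕ) (1 : ℂ))) := by
  unfold Wspace
  congr 1
  ext p
  constructor
  · rintro ⟨α, h1, h2, rfl⟩
    exact ⟨⟨α, mem_Sfin.2 ⟨h1, h2⟩⟩, rfl⟩
  · rintro ⟨⟨α, hα⟩, rfl⟩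
    exact ⟨α, (mem_Sfin.1 hα).1, (mem_Sfin.1 hα).2, rfl⟩

instance Wfd (d i N : ℕ) : FiniteDimensional ℂ ↥(Wspace d i N) := by
  rw [Wspace_eq d i N]
  exact FiniteDimensional.span_of_finite ℂ (Set.finite_range _)

set_option maxHeartbeats 1000000 in
lemma finrank_W (d i N : ℕ) : Module.finrank ℂ ↥(Wspace d i N) = mcount d i N := by
  classical
  have hli : LinearIndependent ℂ
      (fun x : {y : Fin (d + 1) →₀ ℕ // y ∈ Sfin d i N} =>
        MvPolynomial.monomial (x : Fin (d + 1) →₀ ℕ) (1 : ℂ)) := by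
    have h := (MvPolynomial.basisMonomials (Fin (d + 1)) ℂ).linearIndependent.comp
      (fun x : {y : Fin (d + 1) →₀ ℕ // y ∈ Sfin d i N} => (x : Fin (d + 1) →₀ ℕ))
      Subtype.val_injective
    rw [MvPolynomial.coe_basisMonomials] at h
    exact h
  rw [Wspace_eq]
  rw [finrank_span_eq_card hli]
  rw [Fintype.card_coe, card_Sfin]

lemma finrank_inf (d i N : ℕ) (hN : 1 ≤ N) (hdi : 2 * N ≤ d * i) :
    (Module.finrank ℂ
        ↥(Wspace d i N ⊓ LinearMap.ker (D1 d).toLinearMap) : ℤ)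
      = (mcount d i N : ℤ) - (mcount d i (N - 1) : ℤ) := by
  classical
  set e' : ↥(Wspace d i N) →ₗ[ℂ] ↥(Wspace d i (N - 1)) :=
    (D1 d).toLinearMap.restrict (p := Wspace d i N) (q := Wspace d i (N - 1))
      (fun x hx => D1_mem hx) with he'
  have hφmaps : ∀ x ∈ Wspace d i (N - 1), (D2 d).toLinearMap x ∈ Wspace d i N := by
    intro x hx
    have := D2_mem hx
    rwa [Nat.sub_add_cancel hN] at this
  set φ' : ↥(Wspace d i (N - 1)) →ₗ[ℂ] ↥(Wspace d i N) :=
    (D2 d).toLinearMap.restrict (p := Wspace d i (N - 1)) (q := Wspace d i N) hφmaps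
    with hφ'
  have hφinj : Function.Injective φ' := by
    rw [← LinearMap.ker_eq_bot, LinearMap.ker_eq_bot']
    intro v hv0
    have hval : (D2 d).toLinearMap (v : MvPolynomial (Fin (d + 1)) ℂ) = 0 := by
      have := congrArg (Subtype.val) hv0
      simpa [hφ', LinearMap.restrict_apply] using this
    have : (v : MvPolynomial (Fin (d + 1)) ℂ) = 0 := by
      apply ef_inj' hN hdi v.2
      rw [hval, map_zero]
    exact Subtype.ext this
  have hdisj : Disjoint (LinearMap.ker e') (LinearMap.range φ') := by
    rw [Submodule.disjoint_def]
    intro x hxker hxrange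
    obtain ⟨v, rfl⟩ := hxrange
    have hval : (D1 d).toLinearMap ((φ' v : MvPolynomial (Fin (d + 1)) ℂ)) = 0 := by
      have := congrArg (Subtype.val) ((LinearMap.mem_ker).1 hxker)
      simpa [he', LinearMap.restrict_apply] using this
    have hval2 : (φ' v : MvPolynomial (Fin (d + 1)) ℂ)
        = (D2 d).toLinearMap (v : MvPolynomial (Fin (d + 1)) ℂ) := by
      simp [hφ', LinearMap.restrict_apply]
    have hv0 : (v : MvPolynomial (Fin (d + 1)) ℂ) = 0 := by
      apply ef_inj' hN hdi v.2
      rw [← hval2]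
      exact hval
    have : φ' v = 0 := by
      apply Subtype.ext
      rw [hval2, hv0, map_zero]
      simp
    exact this
  have h1 : Module.finrank ℂ ↥(LinearMap.ker e') + Module.finrank ℂ ↥(LinearMap.range φ')
      ≤ Module.finrank ℂ ↥(Wspace d i N) :=
    Submodule.finrank_add_finrank_le_of_disjoint hdisj
  have h2 : Module.finrank ℂ ↥(LinearMap.range φ')
      = Module.finrank ℂ ↥(Wspace d i (N - 1)) := LinearMap.finrank_range_of_inj hφinj
  have h3 : Module.finrank ℂ ↥(LinearMap.range e') + Module.finrank ℂ ↥(LinearMap.ker e')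
      = Module.finrank ℂ ↥(Wspace d i N) := LinearMap.finrank_range_add_finrank_ker e'
  have h4 : Module.finrank ℂ ↥(LinearMap.range e')
      ≤ Module.finrank ℂ ↥(Wspace d i (N - 1)) := Submodule.finrank_le _
  have h5 : Module.finrank ℂ ↥(Wspace d i N ⊓ LinearMap.ker (D1 d).toLinearMap)
      = Module.finrank ℂ ↥(LinearMap.ker e') := by
    have hker : LinearMap.ker e'
        = Submodule.comap (Wspace d i N).subtype (LinearMap.ker (D1 d).toLinearMap) :=
      LinearMap.ker_restrict _
    have hker2 : Submodule.comap (Wspace d i N).subtype (LinearMap.ker (D1 d).toLinearMap)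
        = Submodule.comap (Wspace d i N).subtype
            (Wspace d i N ⊓ LinearMap.ker (D1 d).toLinearMap) := by
      ext x
      simp [Submodule.mem_comap, x.2]
    rw [hker, hker2]
    exact (Submodule.comapSubtypeEquivOfLe inf_le_left).finrank_eq.symm
  rw [h5]
  have h6 := finrank_W d i N
  have h7 := finrank_W d i (N - 1)
  omega

theorem stmt5 (d i j : ℕ) (hd : 1 ≤ d) (hj : j ≤ d * i) (hpar : (d * i - j) % 2 = 0) :
    (Module.finrank ℂ
        ↥(Wspace d i ((d * i - j) / 2) ⊓ LinearMap.ker (D1 d).toLinearMap) : ℤ)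
      = PowerSeries.coeff ((d * i - j) / 2)
          ((1 - PowerSeries.X) *
            (∏ s ∈ Finset.Icc 1 i, (1 - (PowerSeries.X : PowerSeries ℤ) ^ (d + s))) *
            PowerSeries.invOfUnit
              (∏ s ∈ Finset.Icc 1 i, (1 - (PowerSeries.X : PowerSeries ℤ) ^ s)) 1) := by
  set N := (d * i - j) / 2 with hNdef
  have h2N : 2 * N = d * i - j := by omega
  rw [coeff_rhs d i N]
  by_cases hN0 : N = 0
  · rw [hN0, if_pos rfl, sub_zero]
    have hinf : Wspace d i 0 ⊓ LinearMap.ker (D1 d).toLinearMap = Wspace d i 0 := by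
      rw [inf_eq_left]
      intro p hp
      rw [LinearMap.mem_ker]
      exact D1_W0 hp
    rw [hinf, finrank_W]
  · have hN1 : 1 ≤ N := by omega
    have hdi : 2 * N ≤ d * i := by omega
    rw [if_neg hN0]
    exact finrank_inf d i N hN1 hdi
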